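/- arXiv:2207.11405 — 3 statements merged into one kernel-verified Lean document; each statement's English description precedes it below -/
import Mathlib

section
/- Let g̃(s,t) = 2g(s,t) for s > 0 and g̃(s,t) = 1 for s ≤ 0, where g(s,t) = (1/√π) ∫_{s/√(-2t)}^∞ e^{-x²} dx and t < 0. Then g̃ is continuous on ℝ × (-∞,0), and for s > 0 it satisfies ∂ₜg̃(s,t) + (1/2)·max(g̃''(s,t), 0) = 0 with g̃''(s,t) ≥ 0, while for s < 0 it satisfies the same equation trivially (all derivatives vanish). -/
open Real MeasureTheory

noncomputable def g (s t : ℝ) : ℝ :=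
  (1 / Real.sqrt π) * ∫ x in Set.Ioi (s / Real.sqrt (-2 * t)), Real.exp (-x ^ 2)

noncomputable def gTilde (s t : ℝ) : ℝ := if s > 0 then 2 * g s t else 1

noncomputable def FF (a : ℝ) : ℝ := ∫ x in Set.Ioi a, Real.exp (-x ^ 2)

lemma int_exp : Integrable (fun x : ℝ => Real.exp (-x ^ 2)) := by
  have := integrable_exp_neg_mul_sq (b := (1:ℝ)) one_pos
  simpa using this

lemma hasDerivAt_FF (a : ℝ) : HasDerivAt FF (-Real.exp (-a ^ 2)) a := by
  have hFF : FF = fun b => ((∫ x, Real.exp (-x ^ 2)) - ∫ x in Set.Iic (0:ℝ), Real.exp (-x ^ 2))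
      - ∫ x in (0:ℝ)..b, Real.exp (-x ^ 2) := by
    funext b
    have h1 := intervalIntegral.integral_Iic_add_Ioi (b := b) int_exp.integrableOn int_exp.integrableOn
    have h2 := intervalIntegral.integral_Iic_sub_Iic (a := (0:ℝ)) (b := b)
      int_exp.integrableOn int_exp.integrableOn
    simp only [FF]
    linarith
  have h3 : HasDerivAt (fun b => ∫ x in (0:ℝ)..b, Real.exp (-x ^ 2)) (Real.exp (-a ^ 2)) a :=
    intervalIntegral.integral_hasDerivAt_right int_exp.intervalIntegrable
      int_exp.aestronglyMeasurable.stronglyMeasurableAtFilter (by fun_prop)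
  rw [hFF]
  have h4 := (hasDerivAt_const a ((∫ x, Real.exp (-x ^ 2)) - ∫ x in Set.Iic (0:ℝ), Real.exp (-x ^ 2))).sub h3
  rw [zero_sub] at h4
  exact h4

lemma FF_zero : FF 0 = Real.sqrt π / 2 := by
  have := integral_gaussian_Ioi (1:ℝ)
  simp only [FF]
  simpa using this

lemma FF_anti : Antitone FF := by
  intro a b hab
  apply setIntegral_mono_set int_exp.integrableOn
  · filter_upwards with x using (Real.exp_pos _).le
  · exact (Set.Ioi_subset_Ioi hab).eventuallyLE

lemma continuous_FF : Continuous FF :=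
  continuous_iff_continuousAt.2 fun a => (hasDerivAt_FF a).continuousAt

lemma sqrt_neg_two_pos {t : ℝ} (ht : t < 0) : 0 < Real.sqrt (-2 * t) :=
  Real.sqrt_pos.2 (by linarith)

lemma hasDerivAt_inner_t (s t : ℝ) (ht : t < 0) :
    HasDerivAt (fun t' => s / Real.sqrt (-2 * t')) (s / (Real.sqrt (-2 * t)) ^ 3) t := by
  have hc := sqrt_neg_two_pos ht
  have hne : (-2) * t ≠ 0 := by nlinarith
  have h1 : HasDerivAt (fun t' : ℝ => -2 * t') (-2) t := by
    simpa using (hasDerivAt_id t).const_mul (-2 : ℝ)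
  have h2 : HasDerivAt (fun t' => Real.sqrt (-2 * t'))
      (1 / (2 * Real.sqrt (-2 * t)) * (-2)) t :=
    (Real.hasDerivAt_sqrt hne).comp t h1
  have h3 := (h2.inv hc.ne').const_mul s
  have heq : (fun t' => s * (Real.sqrt (-2 * t'))⁻¹) = fun t' => s / Real.sqrt (-2 * t') := by
    funext t'; rw [div_eq_mul_inv]
  simp only [Pi.inv_apply] at h3
  rw [heq] at h3
  refine h3.congr_deriv ?_
  have h4 : (Real.sqrt (-2 * t)) ^ 2 = -2 * t := Real.sq_sqrt (by linarith)
  field_simp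

lemma hasDerivAt_g_t (s t : ℝ) (ht : t < 0) :
    HasDerivAt (fun t' => 2 * g s t')
      (-(2 * s / (Real.sqrt π * (Real.sqrt (-2 * t)) ^ 3))
        * Real.exp (-(s / Real.sqrt (-2 * t)) ^ 2)) t := by
  have hc := sqrt_neg_two_pos ht
  have hπ : (0:ℝ) < Real.sqrt π := Real.sqrt_pos.2 Real.pi_pos
  have h1 := ((hasDerivAt_FF (s / Real.sqrt (-2 * t))).comp t
    (hasDerivAt_inner_t s t ht)).const_mul (2 * (1 / Real.sqrt π))
  have heq : (fun t' => 2 * (1 / Real.sqrt π) * FF (s / Real.sqrt (-2 * t'))) =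
      fun t' => 2 * g s t' := by
    funext t'; simp only [g, FF]; ring
  rw [← heq]
  refine h1.congr_deriv ?_
  field_simp

lemma hasDerivAt_g_s (t : ℝ) (ht : t < 0) (u : ℝ) :
    HasDerivAt (fun u' => 2 * g u' t)
      (-(2 / (Real.sqrt π * Real.sqrt (-2 * t)))
        * Real.exp (-(u / Real.sqrt (-2 * t)) ^ 2)) u := by
  have hc := sqrt_neg_two_pos ht
  have hπ : (0:ℝ) < Real.sqrt π := Real.sqrt_pos.2 Real.pi_pos
  have h0 : HasDerivAt (fun u' : ℝ => u' / Real.sqrt (-2 * t)) (1 / Real.sqrt (-2 * t)) u := by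
    simpa using (hasDerivAt_id u).div_const (Real.sqrt (-2 * t))
  have h1 := ((hasDerivAt_FF (u / Real.sqrt (-2 * t))).comp u h0).const_mul
    (2 * (1 / Real.sqrt π))
  have heq : (fun u' => 2 * (1 / Real.sqrt π) * FF (u' / Real.sqrt (-2 * t))) =
      fun u' => 2 * g u' t := by
    funext u'; simp only [g, FF]; ring
  rw [← heq]
  refine h1.congr_deriv ?_
  field_simp

lemma hasDerivAt_D1 (t : ℝ) (ht : t < 0) (s : ℝ) :
    HasDerivAt (fun u => -(2 / (Real.sqrt π * Real.sqrt (-2 * t)))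
        * Real.exp (-(u / Real.sqrt (-2 * t)) ^ 2))
      (4 * s / (Real.sqrt π * (Real.sqrt (-2 * t)) ^ 3)
        * Real.exp (-(s / Real.sqrt (-2 * t)) ^ 2)) s := by
  have hc := sqrt_neg_two_pos ht
  have hπ : (0:ℝ) < Real.sqrt π := Real.sqrt_pos.2 Real.pi_pos
  have h0 : HasDerivAt (fun u : ℝ => -(u / Real.sqrt (-2 * t)) ^ 2)
      (-(2 * s / (Real.sqrt (-2 * t)) ^ 2)) s := by
    have := ((hasDerivAt_id s).div_const (Real.sqrt (-2 * t))).pow 2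
    have h2 := this.neg
    refine h2.congr_deriv ?_
    simp only [id]
    field_simp
    ring
  have h1 := (h0.exp).const_mul (-(2 / (Real.sqrt π * Real.sqrt (-2 * t))))
  refine h1.congr_deriv ?_
  field_simp
  ring

lemma gTilde_eq_min {s t : ℝ} (ht : t < 0) : gTilde s t = min (2 * g s t) 1 := by
  have hc := sqrt_neg_two_pos ht
  have hπ : (0:ℝ) < Real.sqrt π := Real.sqrt_pos.2 Real.pi_pos
  have hg : 2 * g s t = (2 / Real.sqrt π) * FF (s / Real.sqrt (-2 * t)) := by
    simp only [g, FF]; ring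
  rcases le_or_gt s 0 with hs | hs
  · have h1 : FF 0 ≤ FF (s / Real.sqrt (-2 * t)) :=
      FF_anti (div_nonpos_of_nonpos_of_nonneg hs hc.le)
    have h2 : (1:ℝ) ≤ 2 * g s t := by
      rw [hg]
      calc (1:ℝ) = (2 / Real.sqrt π) * (Real.sqrt π / 2) := by field_simp
        _ ≤ _ := by
          rw [← FF_zero]
          exact mul_le_mul_of_nonneg_left h1 (by positivity)
    simp [gTilde, not_lt.2 hs, min_eq_right h2]
  · have h1 : FF (s / Real.sqrt (-2 * t)) ≤ FF 0 :=
      FF_anti (by positivity)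
    have h2 : 2 * g s t ≤ 1 := by
      rw [hg]
      calc (2 / Real.sqrt π) * FF (s / Real.sqrt (-2 * t))
          ≤ (2 / Real.sqrt π) * (Real.sqrt π / 2) := by
            rw [← FF_zero]
            exact mul_le_mul_of_nonneg_left h1 (by positivity)
        _ = 1 := by field_simp
    simp [gTilde, hs, min_eq_left h2]


/-- `g̃` is continuous on `ℝ × (-∞,0)`; for `s > 0` it satisfies
`∂ₜg̃ + (1/2)·max(g̃'', 0) = 0` with `g̃'' ≥ 0`; for `s < 0` all derivatives vanish. -/
theorem stmt_7 :
    ContinuousOn (fun p : ℝ × ℝ => gTilde p.1 p.2) (Set.univ ×ˢ Set.Iio 0) ∧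
    (∀ s > (0 : ℝ), ∀ t < (0 : ℝ),
      deriv (fun t' => gTilde s t') t
        + (1 / 2) * max (iteratedDeriv 2 (fun s' => gTilde s' t) s) 0 = 0 ∧
      iteratedDeriv 2 (fun s' => gTilde s' t) s ≥ 0) ∧
    (∀ s < (0 : ℝ), ∀ t < (0 : ℝ),
      deriv (fun t' => gTilde s t') t = 0 ∧
      iteratedDeriv 2 (fun s' => gTilde s' t) s = 0) := by
  have hπ : (0:ℝ) < Real.sqrt π := Real.sqrt_pos.2 Real.pi_pos
  refine ⟨?_, ?_, ?_⟩
  · -- continuity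
    have h2g : ContinuousOn (fun p : ℝ × ℝ => 2 * g p.1 p.2)
        (Set.univ ×ˢ Set.Iio 0) := by
      have hinner : ContinuousOn (fun p : ℝ × ℝ => p.1 / Real.sqrt (-2 * p.2))
          (Set.univ ×ˢ Set.Iio 0) := by
        apply ContinuousOn.div continuousOn_fst
        · exact ((continuous_sqrt.comp (continuous_const.mul continuous_snd))).continuousOn
        · rintro ⟨a, b⟩ ⟨-, hb⟩
          exact (sqrt_neg_two_pos hb).ne'
      have : ContinuousOn (fun p : ℝ × ℝ => 2 * ((1 / Real.sqrt π) *
          FF (p.1 / Real.sqrt (-2 * p.2)))) (Set.univ ×ˢ Set.Iio 0) :=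
        (continuousOn_const.mul (continuousOn_const.mul
          (continuous_FF.comp_continuousOn hinner)))
      exact this.congr fun p _ => by simp only [g, FF]
    apply (continuous_min.comp_continuousOn (h2g.prodMk continuousOn_const)).congr
    rintro ⟨a, b⟩ ⟨-, hb⟩
    exact gTilde_eq_min hb
  · -- s > 0
    intro s hs t ht
    have hc := sqrt_neg_two_pos ht
    set c := Real.sqrt (-2 * t) with hcdef
    -- eventual equality near s
    have hev : (fun s' => gTilde s' t) =ᶠ[nhds s] fun s' => 2 * g s' t := by
      filter_upwards [eventually_gt_nhds hs] with u hu
      simp [gTilde, hu]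
    -- second derivative
    have hd1 : deriv (fun s' => gTilde s' t) =ᶠ[nhds s] fun u =>
        -(2 / (Real.sqrt π * c)) * Real.exp (-(u / c) ^ 2) := by
      have := hev.deriv
      refine this.trans (Filter.Eventually.of_forall fun u => ?_)
      exact (hasDerivAt_g_s t ht u).deriv
    have hd2 : iteratedDeriv 2 (fun s' => gTilde s' t) s =
        4 * s / (Real.sqrt π * c ^ 3) * Real.exp (-(s / c) ^ 2) := by
      rw [iteratedDeriv_succ, iteratedDeriv_one]
      rw [hd1.deriv_eq]
      exact (hasDerivAt_D1 t ht s).deriv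
    have hdt : deriv (fun t' => gTilde s t') t =
        -(2 * s / (Real.sqrt π * c ^ 3)) * Real.exp (-(s / c) ^ 2) := by
      have heq : (fun t' => gTilde s t') = fun t' => 2 * g s t' := by
        funext t'; simp [gTilde, hs]
      rw [heq]
      exact (hasDerivAt_g_t s t ht).deriv
    have hpos : 0 ≤ 4 * s / (Real.sqrt π * c ^ 3) * Real.exp (-(s / c) ^ 2) := by
      positivity
    constructor
    · rw [hdt, hd2, max_eq_left hpos]
      field_simp
      ring
    · rw [hd2]; exact hpos
  · -- s < 0
    intro s hs t ht
    constructor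
    · have heq : (fun t' => gTilde s t') = fun _ => (1:ℝ) := by
        funext t'; simp [gTilde, not_lt.2 hs.le]
      rw [heq, deriv_const']
    · have hev : (fun s' => gTilde s' t) =ᶠ[nhds s] fun _ => (1:ℝ) := by
        filter_upwards [eventually_lt_nhds hs] with u hu
        simp [gTilde, not_lt.2 hu.le]
      have hd1 : deriv (fun s' => gTilde s' t) =ᶠ[nhds s] fun _ => (0:ℝ) := by
        refine hev.deriv.trans (Filter.Eventually.of_forall fun u => ?_)
        simp
      rw [iteratedDeriv_succ, iteratedDeriv_one, hd1.deriv_eq]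
      simp
end

section
/- (Leading-order min-max) Let ξ ∈ ℝᴺ be a nonzero vector with all components nonpositive, and let A ⊂ ℝᴺ be a bounded set containing an open neighborhood of the origin. Then min over probability vectors p ∈ Δ_N of max over {z ∈ A : p·z ≥ 0} of ξ·z equals 0, and the minimum is achieved only at p = -ξ/‖ξ‖₁; moreover at that p, equality ξ·z = 0 in the inner maximum holds exactly when p·z = 0. -/
open Finset

/-- Leading-order min-max: for `ξ ≠ 0` with nonpositive components and a bounded set `A`
containing a neighborhood of the origin, the min over probability vectors `p` of
`sup {ξ·z : z ∈ A, p·z ≥ 0}` is `0`, achieved only at `p* = -ξ/‖ξ‖₁`; and at `p*`,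
`ξ·z = 0` exactly when `p*·z = 0`. -/
theorem stmt_11 (N : ℕ) (ξ : Fin N → ℝ) (hξ0 : ξ ≠ 0) (hξ : ∀ i, ξ i ≤ 0)
    (A : Set (Fin N → ℝ)) (hAbd : Bornology.IsBounded A)
    (hA0 : ∃ ε > (0 : ℝ), Metric.ball (0 : Fin N → ℝ) ε ⊆ A)
    (pstar : Fin N → ℝ) (hpstar : pstar = fun i => -ξ i / ∑ j, |ξ j|) :
    (∀ i, 0 ≤ pstar i) ∧ (∑ i, pstar i) = 1 ∧
    sSup {x : ℝ | ∃ z ∈ A, (∑ i, pstar i * z i) ≥ 0 ∧ x = ∑ i, ξ i * z i} = 0 ∧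
    (∀ p : Fin N → ℝ, (∀ i, 0 ≤ p i) → (∑ i, p i) = 1 → p ≠ pstar →
      sSup {x : ℝ | ∃ z ∈ A, (∑ i, p i * z i) ≥ 0 ∧ x = ∑ i, ξ i * z i} > 0) ∧
    (∀ z ∈ A, (∑ i, pstar i * z i) ≥ 0 →
      ((∑ i, ξ i * z i) = 0 ↔ (∑ i, pstar i * z i) = 0)) := by
  set S : ℝ := ∑ j, |ξ j| with hSdef
  obtain ⟨i0, hi0⟩ : ∃ i, ξ i ≠ 0 := Function.ne_iff.mp hξ0
  have hS : 0 < S := by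
    have h1 : |ξ i0| ≤ S := Finset.single_le_sum (f := fun i => |ξ i|) (fun i _ => abs_nonneg _) (mem_univ i0)
    have h2 : 0 < |ξ i0| := abs_pos.mpr hi0
    linarith
  have hps_nonneg : ∀ i, 0 ≤ pstar i := by
    intro i; rw [hpstar]; exact div_nonneg (by linarith [hξ i]) hS.le
  have hps_sum : (∑ i, pstar i) = 1 := by
    rw [hpstar]
    rw [← Finset.sum_div]
    have : (∑ i, -ξ i) = S := by
      rw [hSdef]; exact Finset.sum_congr rfl fun i _ => (abs_of_nonpos (hξ i)).symm
    rw [this, div_self hS.ne']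
  have key : ∀ z : Fin N → ℝ, (∑ i, ξ i * z i) = -S * ∑ i, pstar i * z i := by
    intro z
    rw [hpstar, Finset.mul_sum]
    refine Finset.sum_congr rfl fun i _ => ?_
    field_simp
  obtain ⟨ε, hε, hball⟩ := hA0
  have hz0A : (0 : Fin N → ℝ) ∈ A := hball (Metric.mem_ball_self hε)
  obtain ⟨C, hC⟩ := isBounded_iff_forall_norm_le.mp hAbd
  have bdd : ∀ p : Fin N → ℝ,
      BddAbove {x : ℝ | ∃ z ∈ A, (∑ i, p i * z i) ≥ 0 ∧ x = ∑ i, ξ i * z i} := by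
    intro p
    refine ⟨S * C, ?_⟩
    rintro x ⟨z, hzA, -, rfl⟩
    calc (∑ i, ξ i * z i) ≤ ∑ i, |ξ i * z i| :=
          Finset.sum_le_sum fun i _ => le_abs_self _
      _ ≤ ∑ i, |ξ i| * C := by
          refine Finset.sum_le_sum fun i _ => ?_
          rw [abs_mul]
          exact mul_le_mul_of_nonneg_left
            ((norm_le_pi_norm z i).trans (hC z hzA)) (abs_nonneg _)
      _ = S * C := by rw [← Finset.sum_mul]
  have mem0 : (0 : ℝ) ∈ {x : ℝ | ∃ z ∈ A, (∑ i, pstar i * z i) ≥ 0 ∧ x = ∑ i, ξ i * z i} :=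
    ⟨0, hz0A, by simp⟩
  refine ⟨hps_nonneg, hps_sum, ?_, ?_, ?_⟩
  · apply le_antisymm
    · apply csSup_le ⟨0, mem0⟩
      rintro x ⟨z, hzA, hpz, rfl⟩
      rw [key z]
      exact mul_nonpos_iff.mpr (Or.inr ⟨by linarith, hpz⟩)
    · exact le_csSup (bdd pstar) mem0
  · intro p hp hpsum1 hpne
    obtain ⟨k, hk⟩ : ∃ k, p k < pstar k := by
      by_contra h
      push_neg at h
      apply hpne
      funext i
      have hsum0 : ∑ i, (p i - pstar i) = 0 := by
        rw [Finset.sum_sub_distrib, hpsum1, hps_sum]; ring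
      have := (Finset.sum_eq_zero_iff_of_nonneg
        (fun i _ => sub_nonneg.mpr (h i))).mp hsum0 i (mem_univ i)
      linarith
    obtain ⟨j, hj⟩ : ∃ j, pstar j < p j := by
      by_contra h
      push_neg at h
      apply hpne
      funext i
      have hsum0 : ∑ i, (pstar i - p i) = 0 := by
        rw [Finset.sum_sub_distrib, hpsum1, hps_sum]; ring
      have := (Finset.sum_eq_zero_iff_of_nonneg
        (fun i _ => sub_nonneg.mpr (h i))).mp hsum0 i (mem_univ i)
      linarith
    have hpk0 : 0 < pstar k := lt_of_le_of_lt (hp k) hk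
    have hpj0 : 0 < p j := lt_of_le_of_lt (hps_nonneg j) hj
    have hjk : j ≠ k := by rintro rfl; linarith
    set gap : ℝ := p j * pstar k - p k * pstar j with hgapdef
    have hgap : 0 < gap := by nlinarith [hps_nonneg j, hp k]
    set δ : ℝ := gap / (2 * (p k + 1)) with hδdef
    have hδ : 0 < δ := div_pos hgap (by nlinarith [hp k])
    set z : Fin N → ℝ := Pi.single j (pstar k) + Pi.single k (-(pstar j + δ)) with hzdef
    have hsum2 : ∀ f : Fin N → ℝ,
        (∑ i, f i * z i) = f j * pstar k + f k * (-(pstar j + δ)) := by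
      intro f
      simp only [hzdef, Pi.add_apply, Pi.single_apply, mul_add, mul_ite, mul_zero]
      rw [Finset.sum_add_distrib, Finset.sum_ite_eq', Finset.sum_ite_eq']
      simp
    have hpz : 0 < ∑ i, p i * z i := by
      rw [hsum2 p]
      have h1 : p k * δ ≤ gap / 2 := by
        rw [hδdef, ← mul_div_assoc,
          div_le_div_iff₀ (by nlinarith [hp k]) (by norm_num : (0:ℝ) < 2)]
        nlinarith [hp k, hgap]
      nlinarith
    have hpsz : (∑ i, pstar i * z i) = -(pstar k * δ) := by
      rw [hsum2 pstar]; ring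
    set c : ℝ := ε / (2 * (‖z‖ + 1)) with hcdef
    have hc : 0 < c := by positivity
    have hzcA : c • z ∈ A := by
      apply hball
      rw [Metric.mem_ball, dist_zero_right, norm_smul, Real.norm_eq_abs, abs_of_pos hc]
      have hnz : 0 ≤ ‖z‖ := norm_nonneg z
      rw [hcdef]
      rw [div_mul_eq_mul_div, div_lt_iff₀ (by positivity)]
      nlinarith
    have hmul : ∀ f : Fin N → ℝ, (∑ i, f i * (c • z) i) = c * ∑ i, f i * z i := by
      intro f
      rw [Finset.mul_sum]
      exact Finset.sum_congr rfl fun i _ => by simp [smul_eq_mul]; ring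
    have hxpos : 0 < ∑ i, ξ i * (c • z) i := by
      rw [key, hmul, hpsz]
      have : -S * (c * -(pstar k * δ)) = S * c * pstar k * δ := by ring
      rw [this]
      positivity
    have hmem : (∑ i, ξ i * (c • z) i) ∈
        {x : ℝ | ∃ z ∈ A, (∑ i, p i * z i) ≥ 0 ∧ x = ∑ i, ξ i * z i} := by
      refine ⟨c • z, hzcA, ?_, rfl⟩
      rw [hmul]
      positivity
    exact lt_of_lt_of_le hxpos (le_csSup (bdd p) hmem)
  · intro z hzA hpz
    rw [key z]
    constructor
    · intro h
      rcases mul_eq_zero.mp h with h' | h'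
      · exact absurd h' (by linarith)
      · exact h'
    · intro h; rw [h, mul_zero]
end

section
/- If p ∈ Δ_N and ξ ∈ ℝᴺ is nonzero with nonpositive components, and p is not parallel to -ξ, and A ⊂ ℝᴺ contains an open neighborhood of the origin, then sup over {z ∈ A : p·z ≥ 0} of ξ·z is strictly positive. -/
open Finset

lemma sum_mul_single_aux (N : ℕ) (f : Fin N → ℝ) (j : Fin N) (c : ℝ) :
    ∑ k, f k * (Pi.single j c : Fin N → ℝ) k = f j * c := by
  simp [Pi.single_apply, mul_ite, Finset.sum_ite_eq']

/-- If `p` is a probability vector not parallel to `-ξ` (where `ξ ≠ 0` has nonpositive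
components) and `A` contains a neighborhood of the origin, then the supremum of `ξ·z`
over `{z ∈ A : p·z ≥ 0}` is strictly positive: there is such a `z` with `ξ·z > 0`. -/
theorem stmt_12 (N : ℕ) (ξ : Fin N → ℝ) (hξ0 : ξ ≠ 0) (hξ : ∀ i, ξ i ≤ 0)
    (p : Fin N → ℝ) (hp0 : ∀ i, 0 ≤ p i) (hp1 : (∑ i, p i) = 1)
    (hnp : ¬∃ lam : ℝ, 0 ≤ lam ∧ p = fun i => -lam * ξ i)
    (A : Set (Fin N → ℝ)) (hA0 : ∃ ε > (0 : ℝ), Metric.ball (0 : Fin N → ℝ) ε ⊆ A) :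
    ∃ z ∈ A, (∑ i, p i * z i) ≥ 0 ∧ (∑ i, ξ i * z i) > 0 := by
  obtain ⟨ε, hε, hball⟩ := hA0
  have hpall : ∀ i, p i ≤ 1 := by
    intro i; rw [← hp1]
    exact Finset.single_le_sum (fun j _ => hp0 j) (Finset.mem_univ i)
  by_cases hcase : ∃ j, ξ j < 0 ∧ p j = 0
  · obtain ⟨j, hξj, hpj⟩ := hcase
    refine ⟨Pi.single j (-(ε/2)), hball ?_, ?_, ?_⟩
    · rw [Metric.mem_ball, dist_zero_right]
      have h2 : ‖(Pi.single j (-(ε/2)) : Fin N → ℝ)‖ ≤ ε/2 := by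
        rw [pi_norm_le_iff_of_nonneg (by linarith)]
        intro k
        rcases eq_or_ne k j with h | h
        · rw [Real.norm_eq_abs, h, Pi.single_eq_same, abs_neg,
            abs_of_nonneg (by linarith)]
        · rw [Real.norm_eq_abs, Pi.single_eq_of_ne h]
          simp; linarith
      linarith
    · rw [sum_mul_single_aux, hpj]; simp
    · rw [sum_mul_single_aux]
      nlinarith
  · push_neg at hcase
    have hcase' : ∀ j, ξ j < 0 → 0 < p j := fun j hj => (hp0 j).lt_of_ne' (hcase j hj)
    have hij : ∃ i j, ξ j * p i < ξ i * p j := by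
      by_contra hc
      push_neg at hc
      have heq : ∀ i j, ξ i * p j = ξ j * p i := fun i j => le_antisymm (hc i j) (hc j i)
      obtain ⟨k, hk⟩ := Function.ne_iff.mp hξ0
      have hk' : ξ k ≠ 0 := by simpa using hk
      have hξk : ξ k < 0 := (hξ k).lt_of_ne hk'
      have hξkne : ξ k ≠ 0 := ne_of_lt hξk
      have hpk : 0 < p k := hcase' k hξk
      refine hnp ⟨-(p k) / ξ k, div_nonneg_iff.mpr (Or.inr ⟨by linarith, hξk.le⟩),
        funext fun i => ?_⟩
      have h := heq i k
      field_simp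
      nlinarith [heq i k]
    obtain ⟨i, j, hij⟩ := hij
    have hne : i ≠ j := by rintro rfl; exact lt_irrefl _ hij
    set z : Fin N → ℝ := Pi.single i (ε/2 * p j) + Pi.single j (-(ε/2 * p i)) with hz
    have hsum : ∀ f : Fin N → ℝ, ∑ k, f k * z k = f i * (ε/2 * p j) + f j * (-(ε/2 * p i)) := by
      intro f
      simp only [hz, Pi.add_apply, mul_add, Finset.sum_add_distrib, sum_mul_single_aux]
    have hpj1 := hpall j; have hpi1 := hpall i
    have hpj0 := hp0 j; have hpi0 := hp0 i
    refine ⟨z, hball ?_, ?_, ?_⟩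
    · rw [Metric.mem_ball, dist_zero_right]
      have h2 : ‖z‖ ≤ ε/2 := by
        rw [pi_norm_le_iff_of_nonneg (by linarith)]
        intro k
        rcases eq_or_ne k i with h | h
        · have hzk : z k = ε/2 * p j := by
            simp [hz, h, Pi.single_apply, Ne.symm hne]
          rw [Real.norm_eq_abs, hzk, abs_of_nonneg (mul_nonneg (by linarith) hpj0)]
          nlinarith
        · rcases eq_or_ne k j with h' | h'
          · have hzk : z k = -(ε/2 * p i) := by
              simp [hz, h', Pi.single_apply, hne]
            rw [Real.norm_eq_abs, hzk, abs_neg,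
              abs_of_nonneg (mul_nonneg (by linarith) hpi0)]
            nlinarith
          · have hzk : z k = 0 := by
              simp [hz, Pi.single_apply, h, h']
            rw [Real.norm_eq_abs, hzk, abs_zero]; linarith
      linarith
    · rw [hsum]; ring_nf; simp
    · rw [hsum]; nlinarith
end
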